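/- In the sequential Setchain state machine, history is monotone along executions: if state s' is reachable from state s, then s.epoch ≤ s'.epoch and for every i ≤ s.epoch, s.history(i) = s'.history(i). -/
import Mathlib

structure SCState (E : Type*) where
  theset : Set E
  history : ℕ → Set E
  epoch : ℕ

inductive SCStep (E : Type*) : SCState E → SCState E → Prop
  | add (s : SCState E) (e : E) :
      SCStep E s ⟨s.theset ∪ {e}, s.history, s.epoch⟩
  | epochInc (s : SCState E) (E' : Set E)
      (hE' : E' ⊆ s.theset \ ⋃ k ≤ s.epoch, s.history k) :
      SCStep E s
        ⟨s.theset, Function.update s.history (s.epoch + 1) E', s.epoch + 1⟩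

theorem history_monotone {E : Type*} (s s' : SCState E)
    (h : Relation.ReflTransGen (SCStep E) s s') :
    s.epoch ≤ s'.epoch ∧ ∀ i ≤ s.epoch, s.history i = s'.history i := by
  induction h with
  | refl => exact ⟨le_rfl, fun i _ => rfl⟩
  | tail _ hstep ih =>
    obtain ⟨hle, hh⟩ := ih
    cases hstep with
    | add e => exact ⟨hle, hh⟩
    | epochInc E' hE' =>
      refine ⟨hle.trans (Nat.le_succ _), fun i hi => ?_⟩
      rw [hh i hi]
      simp only
      rw [Function.update_of_ne]
      omega
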